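/- In the same setting, the unique biorthogonal functionals η_n (satisfying ⟨η_n, Φ_m⟩ = δ_{nm}) satisfy η_k = (ε_k!)^{-1/2} (a†)^k η_0 for all k ≥ 0, and b† η_0 = 0, where a† and b† are the adjoints of a and b. -/

import Mathlib

local notation "⟪" x ", " y "⟫" => @inner ℂ _ _ x y

/-- The unique biorthogonal sequence `{η n}` of `{Φ n}` satisfies
`η k = (ε_k!)^{-1/2} (a†)^k η 0` and `b† η 0 = 0`. -/
theorem stmt17 {H : Type*} [NormedAddCommGroup H] [InnerProductSpace ℂ H]
    [CompleteSpace H] (a b ad bd : H →ₗ[ℂ] H) (Φ η : ℕ → H) (ε : ℕ → ℝ)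
    (hε0 : ε 0 = 0) (hmono : StrictMono ε)
    (hadja : ∀ x y : H, ⟪a x, y⟫ = ⟪x, ad y⟫)
    (hadjb : ∀ x y : H, ⟪b x, y⟫ = ⟪x, bd y⟫)
    (haΦ0 : a (Φ 0) = 0)
    (haΦ : ∀ n : ℕ, 1 ≤ n → a (Φ n) = (Real.sqrt (ε n) : ℂ) • Φ (n - 1))
    (hbΦ : ∀ n : ℕ, b (Φ n) = (Real.sqrt (ε (n + 1)) : ℂ) • Φ (n + 1))
    (hbo : ∀ n m : ℕ, ⟪η n, Φ m⟫ = if n = m then (1 : ℂ) else 0)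
    (hdense : Dense ((Submodule.span ℂ (Set.range Φ) : Submodule ℂ H) : Set H)) :
    bd (η 0) = 0 ∧
    ∀ k : ℕ, η k =
      ((Real.sqrt (∏ j ∈ Finset.range k, ε (j + 1)) : ℂ))⁻¹ •
        (ad ^ k) (η 0) := by
  have hεpos : ∀ m : ℕ, 1 ≤ m → 0 < ε m := fun m hm => hε0 ▸ hmono (by omega)
  -- ⟪ad x, y⟫ = ⟪x, a y⟫
  have hadja' : ∀ x y : H, ⟪ad x, y⟫ = ⟪x, a y⟫ := by
    intro x y
    have := congrArg (starRingEnd ℂ) (hadja y x)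
    simpa [inner_conj_symm] using this.symm
  have hadjb' : ∀ x y : H, ⟪bd x, y⟫ = ⟪x, b y⟫ := by
    intro x y
    have := congrArg (starRingEnd ℂ) (hadjb y x)
    simpa [inner_conj_symm] using this.symm
  -- powers
  have hpow : ∀ (k : ℕ) (x y : H), ⟪(ad ^ k) x, y⟫ = ⟪x, (a ^ k) y⟫ := by
    intro k
    induction k with
    | zero => intro x y; simp
    | succ n ih =>
      intro x y
      rw [pow_succ, pow_succ']
      calc ⟪(ad ^ n) (ad x), y⟫ = ⟪ad x, (a ^ n) y⟫ := ih _ _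
        _ = ⟪x, a ((a ^ n) y)⟫ := hadja' _ _
        _ = ⟪x, (a * a ^ n) y⟫ := rfl
  -- action of a^k on Φ m
  have hak : ∀ (k m : ℕ), (a ^ k) (Φ m) =
      if k ≤ m then ((Real.sqrt (∏ j ∈ Finset.range k, ε (m - j)) : ℝ) : ℂ) • Φ (m - k)
      else 0 := by
    intro k
    induction k with
    | zero => intro m; simp
    | succ n ih =>
      intro m
      rw [pow_succ]
      show (a ^ n) (a (Φ m)) = _
      match m with
      | 0 =>
        rw [haΦ0, map_zero, if_neg (by omega)]
      | Nat.succ p =>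
        rw [haΦ p.succ (by omega), map_smul]
        simp only [Nat.succ_sub_one]
        rw [ih p]
        by_cases h : n ≤ p
        · have hidx : p.succ - (n + 1) = p - n := by omega
          rw [if_pos h, if_pos (by omega), hidx, smul_smul]
          congr 1
          have h1 : ∏ j ∈ Finset.range (n + 1), ε (p + 1 - j)
              = ε (p + 1) * ∏ j ∈ Finset.range n, ε (p - j) := by
            rw [Finset.prod_range_succ']
            simp only [Nat.add_sub_add_right, Nat.add_sub_cancel_left, Nat.sub_zero]
            ring
          have hnn : (0:ℝ) ≤ ∏ j ∈ Finset.range n, ε (p - j) :=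
            Finset.prod_nonneg fun j hj => le_of_lt (hεpos _ (by
              simp only [Finset.mem_range] at hj; omega))
          rw [h1, Real.sqrt_mul (le_of_lt (hεpos _ (by omega)))]
          push_cast
          ring
        · rw [if_neg h, if_neg (by omega), smul_zero]
  -- inner products with η 0
  have hkey : ∀ (k m : ℕ), ⟪(ad ^ k) (η 0), Φ m⟫ =
      if k = m then ((Real.sqrt (∏ j ∈ Finset.range k, ε (j + 1)) : ℝ) : ℂ) else 0 := by
    intro k m
    rw [hpow, hak]
    by_cases h : k ≤ m
    · rw [if_pos h, inner_smul_right, hbo]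
      rcases eq_or_lt_of_le h with rfl | hlt
      · rw [if_pos (by omega), if_pos rfl, mul_one]
        congr 2
        rw [← Finset.prod_range_reflect]
        apply Finset.prod_congr rfl
        intro j hj
        simp only [Finset.mem_range] at hj
        congr 1
        omega
      · rw [if_neg (by omega), if_neg (by omega), mul_zero]
    · rw [if_neg h, inner_zero_right, if_neg (by omega)]
  -- constants positive
  have hcpos : ∀ k : ℕ, 0 < Real.sqrt (∏ j ∈ Finset.range k, ε (j + 1)) := by
    intro k
    apply Real.sqrt_pos.mpr
    exact Finset.prod_pos fun j _ => hεpos _ (by omega)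
  -- equality on span generators extends by density: helper
  have hext : ∀ x y : H, (∀ m : ℕ, ⟪x, Φ m⟫ = ⟪y, Φ m⟫) → x = y := by
    intro x y h
    have key : ∀ v ∈ Submodule.span ℂ (Set.range Φ), ⟪x, v⟫ = ⟪y, v⟫ := by
      intro v hv
      induction hv using Submodule.span_induction with
      | mem u hu => obtain ⟨m, rfl⟩ := hu; exact h m
      | zero => simp
      | add u w _ _ hu hw => simp [inner_add_right, hu, hw]
      | smul c u _ hu => simp [inner_smul_right, hu]
    exact hdense.eq_of_inner_left ℂ fun v hv => key v hv
  constructor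
  · -- bd (η 0) = 0
    apply hext
    intro m
    rw [hadjb', hbΦ, inner_smul_right, hbo, if_neg (by omega), mul_zero, inner_zero_left]
  · intro k
    apply hext
    intro m
    rw [inner_smul_left, hkey, hbo]
    by_cases h : k = m
    · subst h
      rw [if_pos rfl, if_pos rfl, map_inv₀, Complex.conj_ofReal,
        inv_mul_cancel₀ (Complex.ofReal_ne_zero.mpr (ne_of_gt (hcpos k)))]
    · rw [if_neg h, if_neg h, mul_zero]
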